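/- arXiv:1706.07907 — 2 statements merged into one kernel-verified Lean document; each statement's English description precedes it below -/
import Mathlib

section
/- Let μ, τ̃⁰ > 0 and define τ̃^{k+1} = τ̃ᵏ / √(1 + μ τ̃ᵏ) for k ≥ 0. Then there exist constants c₁, c₂ > 0 such that c₁/k ≤ τ̃ᵏ ≤ c₂/k for all k ≥ 1; in particular, 1/τ̃ᵏ = Θ(k). -/
set_option maxHeartbeats 1000000 in
/-- For `μ, τ̃⁰ > 0` and `τ̃^{k+1} = τ̃ᵏ/√(1+μτ̃ᵏ)`, there exist constants
`c₁, c₂ > 0` with `c₁/k ≤ τ̃ᵏ ≤ c₂/k` for all `k ≥ 1`; i.e. `1/τ̃ᵏ = Θ(k)`. -/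
theorem stmt_7 (μ : ℝ) (hμ : 0 < μ) (τt : ℕ → ℝ) (hτt0 : 0 < τt 0)
    (hrec : ∀ k, τt (k + 1) = τt k / Real.sqrt (1 + μ * τt k)) :
    ∃ c₁ c₂ : ℝ, 0 < c₁ ∧ 0 < c₂ ∧
      ∀ k : ℕ, 1 ≤ k → c₁ / k ≤ τt k ∧ τt k ≤ c₂ / k := by
  obtain ⟨S, hSdef⟩ : ∃ S : ℝ, S = Real.sqrt (1 + μ * τt 0) := ⟨_, rfl⟩
  have hS0 : (0:ℝ) ≤ 1 + μ * τt 0 := by nlinarith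
  have hS2 : S ^ 2 = 1 + μ * τt 0 := by rw [hSdef]; exact Real.sq_sqrt hS0
  have hSnn : 0 ≤ S := hSdef ▸ Real.sqrt_nonneg _
  have hS1 : (1 : ℝ) ≤ S := by nlinarith [mul_pos hμ hτt0]
  obtain ⟨δ, hδdef⟩ : ∃ d : ℝ, d = μ / (1 + S) := ⟨_, rfl⟩
  have h1S : (0:ℝ) < 1 + S := by linarith
  have hδpos : 0 < δ := by rw [hδdef]; exact div_pos hμ h1S
  have hδμ : δ * (1 + S) = μ := by
    rw [hδdef]; field_simp
  have hδτ0 : δ * τt 0 = S - 1 := by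
    rw [hδdef, div_mul_eq_mul_div, div_eq_iff h1S.ne']
    nlinarith
  have key : ∀ k : ℕ, 0 < τt k ∧ 1 / τt k ≤ 1 / τt 0 + k * (μ / 2) ∧
      1 / τt 0 + k * δ ≤ 1 / τt k := by
    intro k
    induction k with
    | zero => refine ⟨hτt0, by simp, by simp⟩
    | succ k ih =>
      obtain ⟨hpos, hub, hlb⟩ := ih
      have h1 : (0:ℝ) < 1 + μ * τt k := by nlinarith
      have hs : 0 < Real.sqrt (1 + μ * τt k) := Real.sqrt_pos.mpr h1
      have hpos' : 0 < τt (k + 1) := by rw [hrec k]; positivity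
      have hinv : 1 / τt (k + 1) = Real.sqrt (1 + μ * τt k) / τt k := by
        rw [hrec k, one_div_div]
      have hle0 : τt k ≤ τt 0 := by
        have h2 : 1 / τt 0 ≤ 1 / τt k := by
          nlinarith [mul_nonneg (Nat.cast_nonneg (α := ℝ) k) hδpos.le]
        exact le_of_one_div_le_one_div hτt0 h2
      refine ⟨hpos', ?_, ?_⟩
      · -- upper bound on 1/τ
        have hsub : Real.sqrt (1 + μ * τt k) ≤ 1 + μ * τt k / 2 := by
          have h3 := Real.sqrt_le_sqrt
            (show 1 + μ * τt k ≤ (1 + μ * τt k / 2)^2 by nlinarith [sq_nonneg (μ * τt k)])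
          rwa [Real.sqrt_sq (by nlinarith)] at h3
        have h4 : Real.sqrt (1 + μ * τt k) / τt k ≤ (1 + μ * τt k / 2) / τt k := by
          gcongr
        have h5 : (1 + μ * τt k / 2) / τt k = 1 / τt k + μ / 2 := by
          rw [div_eq_iff hpos.ne']; field_simp
        rw [← hinv, h5] at h4
        push_cast
        push_cast at hub
        linarith
      · -- lower bound on 1/τ, i.e. upper bound on τ
        have hδk : δ * τt k ≤ S - 1 := by
          calc δ * τt k ≤ δ * τt 0 := by nlinarith
            _ = S - 1 := hδτ0
        have hsq : (1 + δ * τt k) ^ 2 ≤ 1 + μ * τt k := by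
          nlinarith [hδμ, mul_le_mul_of_nonneg_left hδk (mul_pos hδpos hpos).le,
            mul_pos hδpos hpos]
        have hslb : 1 + δ * τt k ≤ Real.sqrt (1 + μ * τt k) := by
          have h3 := Real.sqrt_le_sqrt hsq
          rwa [Real.sqrt_sq (by nlinarith [mul_pos hδpos hpos])] at h3
        have h6 : (1 + δ * τt k) / τt k ≤ Real.sqrt (1 + μ * τt k) / τt k := by gcongr
        have h7 : (1 + δ * τt k) / τt k = 1 / τt k + δ := by
          rw [div_eq_iff hpos.ne']; field_simp
        rw [h7] at h6
        rw [hinv]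
        push_cast
        push_cast at hlb
        linarith
  refine ⟨1 / (1 / τt 0 + μ / 2), 1 / δ, by positivity, one_div_pos.mpr hδpos, ?_⟩
  intro k hk
  obtain ⟨hpos, hub, hlb⟩ := key k
  have hk1 : (1:ℝ) ≤ (k:ℝ) := by exact_mod_cast hk
  have hA : (0:ℝ) < 1 / τt 0 + μ / 2 := by positivity
  have hτ0inv : (0:ℝ) < 1 / τt 0 := by positivity
  constructor
  · have h8 : 1 / τt k ≤ (k:ℝ) * (1 / τt 0 + μ / 2) := by
      have hprod : 0 ≤ ((k:ℝ) - 1) * (1 / τt 0) :=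
        mul_nonneg (by linarith) hτ0inv.le
      nlinarith [hprod]
    rw [div_le_iff₀ hpos] at h8
    rw [div_div, div_le_iff₀ (by positivity : (0:ℝ) < (1 / τt 0 + μ / 2) * k)]
    linarith [h8]
  · have h8 : (k:ℝ) * δ ≤ 1 / τt k := by linarith
    rw [le_div_iff₀ hpos] at h8
    rw [div_div, le_div_iff₀ (by positivity : (0:ℝ) < δ * k)]
    linarith [h8]
end

section
/- Let f_i : ℝⁿ → ℝ, i = 1,…,N, be convex and differentiable with L_i-Lipschitz gradients, such that f̄(x) = Σᵢ f_i(x) is strongly convex with modulus μ̄ > 0. Let C ⊆ ℝ^{nN} be the consensus cone {x : x₁ = ⋯ = x_N} and define f(x) = Σᵢ f_i(x_i) and f_α(x) = f(x) + (α/2)d_C(x)². Then for any α > (4/μ̄)Σᵢ L_i², f_α satisfies ⟨∇f_α(x) - ∇f_α(x*), x - x*⟩ ≥ μ_α ‖x - x*‖² for all x, where x* = 1_N ⊗ x* with x* the minimizer of f̄, L̄ = √(Σᵢ L_i²/N), and μ_α = (μ̄/N + α)/2 - √(((μ̄/N - α)/2)² + 4L̄²) > 0. -/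
open scoped RealInnerProductSpace

section helpers
variable {E : Type*} [NormedAddCommGroup E] [InnerProductSpace ℝ E] [CompleteSpace E]

lemma aux_grad_le (f : E → ℝ) (hc : ConvexOn ℝ Set.univ f) (hd : Differentiable ℝ f)
    (a b : E) : ⟪gradient f a, b - a⟫ ≤ f b - f a := by
  set g : ℝ → ℝ := fun t => f (a + t • (b - a)) with hg
  have hline : ∀ t : ℝ, HasDerivAt (fun s : ℝ => a + s • (b - a)) (b - a) t := by
    intro t
    simpa using ((hasDerivAt_id t).smul_const (b - a)).const_add a
  have hgd : ∀ t : ℝ, HasDerivAt g ⟪gradient f (a + t • (b - a)), b - a⟫ t := by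
    intro t
    have hf := (hd (a + t • (b - a))).hasGradientAt
    rw [hasGradientAt_iff_hasFDerivAt] at hf
    have := hf.comp_hasDerivAt t (hline t)
    exact this
  have hcg : ConvexOn ℝ Set.univ g := by
    have := hc.comp_affineMap (AffineMap.lineMap a b : ℝ →ᵃ[ℝ] E)
    have he : g = f ∘ (AffineMap.lineMap a b : ℝ →ᵃ[ℝ] E) := by
      funext t; simp [g, AffineMap.lineMap_apply, add_comm]
    rw [he]
    simpa using this
  have h01 : (0:ℝ) < 1 := one_lt_two.trans_le (le_refl 2) |>.trans_le (le_refl 2) |> fun _ => one_pos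
  have hslope := hcg.deriv_le_slope (Set.mem_univ 0) (Set.mem_univ 1) one_pos
    ((hgd 0).differentiableAt)
  rw [(hgd 0).deriv] at hslope
  have : slope g 0 1 = g 1 - g 0 := by simp [slope_def_field]
  rw [this] at hslope
  simpa [g] using hslope

lemma aux_grad_mono (f : E → ℝ) (hc : ConvexOn ℝ Set.univ f) (hd : Differentiable ℝ f)
    (a b : E) : 0 ≤ ⟪gradient f a - gradient f b, a - b⟫ := by
  have h1 := aux_grad_le f hc hd a b
  have h2 := aux_grad_le f hc hd b a
  have e1 : ⟪gradient f a, b - a⟫ = - ⟪gradient f a, a - b⟫ := by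
    rw [← inner_neg_right, neg_sub]
  have e2 : ⟪gradient f b, a - b⟫ ≤ f a - f b := h2
  rw [inner_sub_left]
  nlinarith [h1, e2, e1]

lemma aux_hasGradientAt_sum {ι : Type*} (s : Finset ι) (f : ι → E → ℝ) (g : ι → E) (x : E)
    (h : ∀ i ∈ s, HasGradientAt (f i) (g i) x) :
    HasGradientAt (fun z => ∑ i ∈ s, f i z) (∑ i ∈ s, g i) x := by
  rw [hasGradientAt_iff_hasFDerivAt, map_sum]
  exact HasFDerivAt.fun_sum fun i hi => by
    have := h i hi; rwa [hasGradientAt_iff_hasFDerivAt] at this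

end helpers


lemma aux_quad1 (Nr μb L2 α : ℝ) (hN : 1 ≤ Nr) (hμb : 0 < μb) (hL2 : 0 ≤ L2)
    (hα : 4 / μb * L2 < α) :
    0 < (μb / Nr + α) / 2 - Real.sqrt (((μb / Nr - α) / 2) ^ 2 + 4 * Real.sqrt (L2 / Nr) ^ 2) := by
  have hNr : 0 < Nr := lt_of_lt_of_le one_pos hN
  have h4 : 4 / μb * L2 * μb = 4 * L2 := by field_simp
  have hmul : 4 * L2 < μb * α := by nlinarith [mul_lt_mul_of_pos_right hα hμb]
  have hαpos : 0 < α := lt_of_le_of_lt (by positivity) hα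
  have hl2 : Real.sqrt (L2 / Nr) ^ 2 = L2 / Nr := Real.sq_sqrt (by positivity)
  rw [sub_pos, hl2, Real.sqrt_lt' (by positivity)]
  have e : μb / Nr * α = μb * α / Nr := by ring
  have h5 : 4 * (L2 / Nr) < μb * α / Nr := by
    rw [show 4 * (L2 / Nr) = 4 * L2 / Nr by ring]
    exact div_lt_div_of_pos_right hmul hNr
  nlinarith [h5, e]

lemma aux_quad2 (Nr μb L2 α c b : ℝ) (hN : 1 ≤ Nr) (hμb : 0 < μb) (hL2 : 0 ≤ L2)
    (hα : 4 / μb * L2 < α) (hc : 0 ≤ c) (hb : 0 ≤ b) :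
    ((μb / Nr + α) / 2 - Real.sqrt (((μb / Nr - α) / 2) ^ 2 + 4 * Real.sqrt (L2 / Nr) ^ 2))
        * (Nr * c ^ 2 + b ^ 2)
      ≤ μb * c ^ 2 - 2 * Real.sqrt L2 * c * b + α * b ^ 2 := by
  have hNr : 0 < Nr := lt_of_lt_of_le one_pos hN
  set m : ℝ := μb / Nr with hm
  set l : ℝ := Real.sqrt (L2 / Nr) with hldef
  have hl : 0 ≤ l := Real.sqrt_nonneg _
  have hl2 : l ^ 2 = L2 / Nr := Real.sq_sqrt (by positivity)
  set r : ℝ := Real.sqrt (((m - α) / 2) ^ 2 + 4 * l ^ 2) with hrdef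
  have hr0 : 0 ≤ r := Real.sqrt_nonneg _
  have hr2 : r ^ 2 = ((m - α) / 2) ^ 2 + 4 * l ^ 2 := Real.sq_sqrt (by positivity)
  have habs : |(m - α) / 2| ≤ r := by
    rw [← Real.sqrt_sq_eq_abs]
    exact Real.sqrt_le_sqrt (by nlinarith [sq_nonneg l])
  obtain ⟨h1, h2⟩ := abs_le.mp habs
  set p : ℝ := r + (m - α) / 2 with hpdef
  set q : ℝ := r - (m - α) / 2 with hqdef
  have hp : 0 ≤ p := by simp [hpdef]; linarith
  have hq : 0 ≤ q := by simp [hqdef]; linarith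
  have hpq : p * q = 4 * l ^ 2 := by
    have : p * q = r ^ 2 - ((m - α) / 2) ^ 2 := by ring
    rw [this, hr2]; ring
  set a : ℝ := Real.sqrt Nr * c with hadef
  have ha : 0 ≤ a := by positivity
  have hsN : Real.sqrt Nr ^ 2 = Nr := Real.sq_sqrt hNr.le
  have ha2 : a ^ 2 = Nr * c ^ 2 := by rw [hadef, mul_pow, hsN]
  have hLs : l * Real.sqrt Nr = Real.sqrt L2 := by
    rw [← Real.sqrt_sq (by positivity : (0:ℝ) ≤ l * Real.sqrt Nr)]
    congr 1
    rw [mul_pow, hl2, hsN]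
    field_simp
  have hmN : m * Nr = μb := by rw [hm]; field_simp
  have hspq : Real.sqrt p * Real.sqrt q = 2 * l := by
    rw [← Real.sqrt_mul hp q, hpq, show 4 * l ^ 2 = (2 * l) ^ 2 by ring,
      Real.sqrt_sq (by positivity)]
  have main : 2 * l * (a * b) ≤ p * a ^ 2 + q * b ^ 2 := by
    nlinarith [sq_nonneg (Real.sqrt p * a - Real.sqrt q * b), Real.sq_sqrt hp, Real.sq_sqrt hq,
      hspq, mul_nonneg ha hb, hl]
  have hcross : Real.sqrt L2 * c = l * a := by rw [hadef, ← hLs]; ring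
  calc ((m + α) / 2 - r) * (Nr * c ^ 2 + b ^ 2)
      = m * a ^ 2 - 2 * l * (a * b) + α * b ^ 2 - (p * a ^ 2 + q * b ^ 2 - 2 * l * (a * b)) := by
        rw [ha2]; ring
    _ ≤ m * a ^ 2 - 2 * l * (a * b) + α * b ^ 2 := by linarith
    _ = μb * c ^ 2 - 2 * Real.sqrt L2 * c * b + α * b ^ 2 := by
        rw [ha2, ← mul_assoc, hmN]  -- m * (Nr * c^2) vs ...
        rw [show 2 * Real.sqrt L2 * c * b = 2 * (Real.sqrt L2 * c) * b by ring, hcross]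
        ring


noncomputable def Pcons (n N : ℕ) :
    PiLp 2 (fun _ : Fin N => EuclideanSpace ℝ (Fin n)) →L[ℝ]
      PiLp 2 (fun _ : Fin N => EuclideanSpace ℝ (Fin n)) :=
  { toLinearMap :=
    { toFun := fun z => WithLp.toLp 2 (fun _ => (N : ℝ)⁻¹ • ∑ i, z i)
      map_add' := by
        intro z w
        ext j
        simp [PiLp.add_apply, Finset.sum_add_distrib, smul_add]
      map_smul' := by
        intro c z
        ext j
        simp [PiLp.smul_apply, Finset.smul_sum, smul_comm c] }
    cont := by fun_prop }

@[simp] lemma Pcons_apply {n N : ℕ} (z : PiLp 2 (fun _ : Fin N => EuclideanSpace ℝ (Fin n)))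
    (j : Fin N) : Pcons n N z j = (N : ℝ)⁻¹ • ∑ i, z i := rfl

section consensus
variable {n N : ℕ}

local notation "E" => EuclideanSpace ℝ (Fin n)
local notation "F" => PiLp 2 (fun _ : Fin N => EuclideanSpace ℝ (Fin n))

lemma Pcons_sum (hN : 0 < N) (c : E) : ((N : ℝ)⁻¹ • (∑ _i : Fin N, c) : E) = c := by
  rw [Finset.sum_const, Finset.card_univ, Fintype.card_fin,
    ← Nat.cast_smul_eq_nsmul ℝ, smul_smul,
    inv_mul_cancel₀ (Nat.cast_ne_zero.mpr hN.ne'), one_smul]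

lemma Pcons_const (hN : 0 < N) (c : E) :
    Pcons n N (WithLp.toLp 2 (fun _ => c)) = WithLp.toLp 2 (fun _ => c) := by
  refine PiLp.ext fun j => ?_
  show ((N : ℝ)⁻¹ • (∑ _i : Fin N, c) : E) = c
  exact Pcons_sum hN c

lemma Pcons_orth (hN : 0 < N) (z w : F) (hw : ∃ xb, ∀ i, w i = xb) :
    ⟪z - Pcons n N z, w⟫ = 0 := by
  obtain ⟨xb, hxb⟩ := hw
  rw [PiLp.inner_apply]
  have hsum : (∑ i : Fin N, (z i - (N : ℝ)⁻¹ • ∑ k, z k) : E) = 0 := by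
    rw [Finset.sum_sub_distrib]
    have : (∑ _i : Fin N, ((N : ℝ)⁻¹ • ∑ k, z k) : E) = ∑ k, z k := by
      rw [Finset.sum_const, Finset.card_univ, Fintype.card_fin,
        ← Nat.cast_smul_eq_nsmul ℝ, smul_smul,
        mul_inv_cancel₀ (Nat.cast_ne_zero.mpr hN.ne'), one_smul]
    rw [this, sub_self]
  calc (∑ i, ⟪(z - Pcons n N z) i, w i⟫) = ∑ i, ⟪z i - (N : ℝ)⁻¹ • ∑ k, z k, xb⟫ := by
        refine Finset.sum_congr rfl fun i _ => ?_
        rw [PiLp.sub_apply, Pcons_apply, hxb i]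
    _ = ⟪(∑ i : Fin N, (z i - (N : ℝ)⁻¹ • ∑ k, z k) : E), xb⟫ := (sum_inner _ _ _).symm
    _ = 0 := by rw [hsum, inner_zero_left]

lemma infDist_cons (hN : 0 < N) (z : F) :
    Metric.infDist z {w : F | ∃ xb, ∀ i, w i = xb} = ‖z - Pcons n N z‖ := by
  set C : Set F := {w : F | ∃ xb, ∀ i, w i = xb} with hC
  have hCne : C.Nonempty := ⟨(WithLp.toLp 2 (fun _ => 0) : F), ⟨0, fun _ => rfl⟩⟩
  have hPz : Pcons n N z ∈ C := ⟨(N : ℝ)⁻¹ • ∑ i, z i, fun _ => rfl⟩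
  refine le_antisymm ((Metric.infDist_le_dist_of_mem hPz).trans_eq (dist_eq_norm _ _)) ?_
  by_contra h
  push_neg at h
  obtain ⟨w, hw, hlt⟩ := (Metric.infDist_lt_iff hCne).mp h
  obtain ⟨xb, hxb⟩ := hw
  have hCmem : Pcons n N z - w ∈ C := by
    refine ⟨(N : ℝ)⁻¹ • ∑ i, z i - xb, fun i => ?_⟩
    rw [PiLp.sub_apply, Pcons_apply, hxb i]
  have horth := Pcons_orth hN z (Pcons n N z - w) hCmem
  have hdecomp : z - w = (z - Pcons n N z) + (Pcons n N z - w) := by abel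
  have hpyth : ‖z - w‖ ^ 2 = ‖z - Pcons n N z‖ ^ 2 + ‖Pcons n N z - w‖ ^ 2 := by
    rw [hdecomp, norm_add_sq_real, horth]; ring
  have hle : ‖z - Pcons n N z‖ ≤ ‖z - w‖ := by
    nlinarith [norm_nonneg (z - w), norm_nonneg (Pcons n N z - w),
      norm_nonneg (z - Pcons n N z)]
  rw [dist_eq_norm] at hlt
  linarith

end consensus

section gradcons
variable {n N : ℕ}

local notation "E" => EuclideanSpace ℝ (Fin n)
local notation "F" => PiLp 2 (fun _ : Fin N => EuclideanSpace ℝ (Fin n))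

lemma hasGradientAt_fcons (hN : 0 < N) (f : Fin N → E → ℝ)
    (hdiff : ∀ i, Differentiable ℝ (f i)) (α : ℝ) (x : PiLp 2 (fun _ : Fin N => EuclideanSpace ℝ (Fin n))) :
    HasGradientAt (fun z : F => (∑ i, f i (z i)) + α / 2 * ‖z - Pcons n N z‖ ^ 2)
      ((WithLp.equiv 2 (∀ _ : Fin N, EuclideanSpace ℝ (Fin n))).symm
          (fun i => gradient (f i) (x i)) + α • (x - Pcons n N x)) x := by
  set Q : F →L[ℝ] F := ContinuousLinearMap.id ℝ _ - Pcons n N with hQdef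
  have hQ : ∀ z : F, Q z = z - Pcons n N z := fun z => by
    simp [hQdef, ContinuousLinearMap.sub_apply]
  have h1 : HasFDerivAt (fun z : F => ∑ i, f i (z i))
      (∑ i, ((InnerProductSpace.toDual ℝ _ (gradient (f i) (x i))).comp
        (PiLp.proj 2 (fun _ : Fin N => E) i))) x := by
    apply HasFDerivAt.fun_sum
    intro i _
    have h := (hdiff i (x i)).hasGradientAt
    rw [hasGradientAt_iff_hasFDerivAt] at h
    have := h.comp x ((PiLp.proj (𝕜 := ℝ) 2 (fun _ : Fin N => E) i).hasFDerivAt (x := x))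
    exact this
  have h2' : HasFDerivAt (fun z : F => ⟪Q z, Q z⟫)
      ((fderivInnerCLM ℝ (Q x, Q x)).comp (Q.prod Q)) x :=
    Q.hasFDerivAt.inner ℝ Q.hasFDerivAt
  have heq : (fun z : F => α / 2 * ‖z - Pcons n N z‖ ^ 2)
      = fun z : F => α / 2 * ⟪Q z, Q z⟫ := by
    funext z
    rw [real_inner_self_eq_norm_sq, hQ]
  have h2 := h2'.const_mul (α / 2)
  rw [← heq] at h2
  have total := h1.add h2
  rw [hasGradientAt_iff_hasFDerivAt]
  refine total.congr_fderiv ?_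
  ext v
  have horthQ : ⟪Q x, Q v⟫ = ⟪Q x, v⟫ := by
    have hmem : Pcons n N v ∈ {w : F | ∃ xb, ∀ i, w i = xb} :=
      ⟨(N : ℝ)⁻¹ • ∑ i, v i, fun _ => rfl⟩
    have h0 : ⟪Q x, Pcons n N v⟫ = 0 := by
      rw [hQ]
      exact Pcons_orth hN x (Pcons n N v) hmem
    have hsub : v - Q v = Pcons n N v := by rw [hQ]; abel
    have := inner_sub_right (𝕜 := ℝ) (Q x) v (Q v)
    rw [hsub, h0] at this
    linarith
  have hcomm : ⟪Q v, Q x⟫ = ⟪Q x, v⟫ := by rw [real_inner_comm]; exact horthQ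
  have lhs_eq : ((∑ i, ((InnerProductSpace.toDual ℝ _ (gradient (f i) (x i))).comp
        (PiLp.proj 2 (fun _ : Fin N => E) i))) + (α / 2) •
          ((fderivInnerCLM ℝ (Q x, Q x)).comp (Q.prod Q))) v
      = (∑ i, ⟪gradient (f i) (x i), v i⟫) + α * ⟪Q x, v⟫ := by
    rw [ContinuousLinearMap.add_apply, ContinuousLinearMap.sum_apply,
      ContinuousLinearMap.smul_apply, ContinuousLinearMap.comp_apply,
      fderivInnerCLM_apply]
    simp only [ContinuousLinearMap.prod_apply, ContinuousLinearMap.comp_apply,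
      InnerProductSpace.toDual_apply_apply, PiLp.proj_apply, smul_eq_mul]
    rw [hcomm, horthQ]
    ring
  have rhs_eq : (InnerProductSpace.toDual ℝ _
      ((WithLp.equiv 2 (∀ _ : Fin N, EuclideanSpace ℝ (Fin n))).symm
          (fun i => gradient (f i) (x i)) + α • (x - Pcons n N x))) v
      = (∑ i, ⟪gradient (f i) (x i), v i⟫) + α * ⟪Q x, v⟫ := by
    rw [InnerProductSpace.toDual_apply_apply, PiLp.inner_apply]
    have hterm : ∀ i : Fin N, ⟪((WithLp.equiv 2 (∀ _ : Fin N, EuclideanSpace ℝ (Fin n))).symm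
          (fun i => gradient (f i) (x i)) + α • (x - Pcons n N x)) i, v i⟫
        = ⟪gradient (f i) (x i), v i⟫ + α * ⟪(x - Pcons n N x) i, v i⟫ := by
      intro i
      rw [PiLp.add_apply, inner_add_left, PiLp.smul_apply, real_inner_smul_left,
        WithLp.equiv_symm_apply, PiLp.toLp_apply]
    rw [Finset.sum_congr rfl fun i _ => hterm i, Finset.sum_add_distrib, ← Finset.mul_sum,
      hQ, PiLp.inner_apply]
  rw [rhs_eq, lhs_eq]

end gradcons

/-- Regularizing the separable sum `f(x) = Σᵢ fᵢ(xᵢ)` by `(α/2)d_C(x)²` (distance to the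
consensus subspace `C`) yields a function satisfying the restricted strong convexity
inequality `⟨∇f_α(x) - ∇f_α(x*), x - x*⟩ ≥ μ_α‖x - x*‖²` with
`μ_α = (μ̄/N + α)/2 - √(((μ̄/N - α)/2)² + 4L̄²) > 0`, for any `α > (4/μ̄)Σᵢ Lᵢ²`,
where `x* = 1_N ⊗ x*` is the stacked minimizer of the strongly convex sum
`f̄(x) = Σᵢ fᵢ(x)` and `L̄ = √(Σᵢ Lᵢ²/N)`. -/
theorem stmt_12 {n N : ℕ} (hN : 0 < N)
    (f : Fin N → (EuclideanSpace ℝ (Fin n) → ℝ)) (L : Fin N → ℝ) (hL : ∀ i, 0 ≤ L i)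
    (hconv : ∀ i, ConvexOn ℝ Set.univ (f i))
    (hdiff : ∀ i, Differentiable ℝ (f i))
    (hlip : ∀ i, LipschitzWith (L i).toNNReal (gradient (f i)))
    (μb : ℝ) (hμb : 0 < μb)
    (hsc : ∀ x y : EuclideanSpace ℝ (Fin n),
      (∑ i, f i x) ≥ (∑ i, f i y) + ⟪gradient (fun z => ∑ i, f i z) y, x - y⟫
        + μb / 2 * ‖x - y‖ ^ 2)
    (xstar : EuclideanSpace ℝ (Fin n)) (hmin : ∀ y, (∑ i, f i xstar) ≤ ∑ i, f i y)
    (α : ℝ) (hα : 4 / μb * ∑ i, L i ^ 2 < α) :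
    let C : Set (PiLp 2 fun _ : Fin N => EuclideanSpace ℝ (Fin n)) :=
      {z | ∃ xb, ∀ i, z i = xb}
    let fα : (PiLp 2 fun _ : Fin N => EuclideanSpace ℝ (Fin n)) → ℝ :=
      fun z => (∑ i, f i (z i)) + α / 2 * Metric.infDist z C ^ 2
    let Lb : ℝ := Real.sqrt ((∑ i, L i ^ 2) / N)
    let μα : ℝ := (μb / N + α) / 2 - Real.sqrt (((μb / N - α) / 2) ^ 2 + 4 * Lb ^ 2)
    let bxstar : PiLp 2 fun _ : Fin N => EuclideanSpace ℝ (Fin n) := WithLp.toLp 2 (fun _ => xstar)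
    0 < μα ∧
      ∀ x, ⟪gradient fα x - gradient fα bxstar, x - bxstar⟫ ≥ μα * ‖x - bxstar‖ ^ 2 := by
  intro C fα Lb μα bxstar
  have hNr : (1 : ℝ) ≤ (N : ℝ) := by exact_mod_cast hN
  have hL2 : (0 : ℝ) ≤ ∑ i, L i ^ 2 := by positivity
  constructor
  · exact aux_quad1 (N : ℝ) μb (∑ i, L i ^ 2) α hNr hμb hL2 hα
  intro x
  -- notation
  set g : Fin N → EuclideanSpace ℝ (Fin n) → EuclideanSpace ℝ (Fin n) :=
    fun i => gradient (f i) with hg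
  set xb : EuclideanSpace ℝ (Fin n) := (N : ℝ)⁻¹ • ∑ i, x i with hxb
  set v : PiLp 2 (fun _ : Fin N => EuclideanSpace ℝ (Fin n)) := x - Pcons n N x with hv
  set c : ℝ := ‖xb - xstar‖ with hc
  set b : ℝ := ‖v‖ with hb
  have hc0 : 0 ≤ c := norm_nonneg _
  have hb0 : 0 ≤ b := norm_nonneg _
  -- the function fα in workable form
  have hfa : fα = fun z => (∑ i, f i (z i)) + α / 2 * ‖z - Pcons n N z‖ ^ 2 := by
    funext z
    show (∑ i, f i (z i)) + α / 2 *
        Metric.infDist z {w : PiLp 2 fun _ : Fin N => EuclideanSpace ℝ (Fin n) | ∃ xb, ∀ i, w i = xb} ^ 2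
      = _
    rw [infDist_cons hN z]
  have hgrad : ∀ z, gradient fα z =
      (WithLp.equiv 2 (∀ _ : Fin N, EuclideanSpace ℝ (Fin n))).symm
          (fun i => gradient (f i) (z i)) + α • (z - Pcons n N z) := by
    intro z
    rw [hfa]
    exact (hasGradientAt_fcons hN f hdiff α z).gradient
  have hPbx : Pcons n N bxstar = bxstar := Pcons_const hN xstar
  have hgbx : gradient fα bxstar =
      (WithLp.equiv 2 (∀ _ : Fin N, EuclideanSpace ℝ (Fin n))).symm
          (fun i => gradient (f i) xstar) := by
    rw [hgrad bxstar, hPbx, sub_self, smul_zero, add_zero]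
  -- pointwise values
  have hvi : ∀ i, v i = x i - xb := fun i => rfl
  have hxbx : ∀ i : Fin N, (x - bxstar) i = x i - xstar := fun i => rfl
  have hubx : ∀ i : Fin N, (Pcons n N x - bxstar) i = xb - xstar := fun i => rfl
  -- membership facts
  have hmemP : ∀ z : PiLp 2 (fun _ : Fin N => EuclideanSpace ℝ (Fin n)),
      ∃ q, ∀ i, (Pcons n N z) i = q := fun z => ⟨(N : ℝ)⁻¹ • ∑ i, z i, fun _ => rfl⟩
  have hmemU : ∃ q, ∀ i : Fin N, (Pcons n N x - bxstar) i = q := ⟨xb - xstar, hubx⟩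
  -- inner of v with consensus part vanishes
  have hvU : ⟪v, Pcons n N x - bxstar⟫ = 0 := Pcons_orth hN x _ hmemU
  -- Step B : ⟪v, x - bxstar⟫ = b ^ 2
  have hstepB : ⟪v, x - bxstar⟫ = b ^ 2 := by
    have hd : x - bxstar = (Pcons n N x - bxstar) + v := by rw [hv]; abel
    rw [hd, inner_add_right, hvU, zero_add, real_inner_self_eq_norm_sq]
  -- Step C : ‖x - bxstar‖ ^ 2 = N * c ^ 2 + b ^ 2
  have hstepC : ‖x - bxstar‖ ^ 2 = N * c ^ 2 + b ^ 2 := by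
    have hd : x - bxstar = (Pcons n N x - bxstar) + v := by rw [hv]; abel
    have ho : ⟪Pcons n N x - bxstar, v⟫ = 0 := by
      rw [real_inner_comm]; exact hvU
    have hU2 : ‖Pcons n N x - bxstar‖ ^ 2 = N * c ^ 2 := by
      rw [PiLp.norm_sq_eq_of_L2]
      simp only [hubx]
      rw [Finset.sum_const, Finset.card_univ, Fintype.card_fin, nsmul_eq_mul, hc]
    rw [hd, norm_add_sq_real, ho, hU2, hb]
    ring
  -- gradient of the sum
  have hgs : ∀ y, gradient (fun z => ∑ i, f i z) y = ∑ i, g i y := by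
    intro y
    exact (aux_hasGradientAt_sum Finset.univ f (fun i => g i y) y
      (fun i _ => (hdiff i y).hasGradientAt)).gradient
  -- strong monotonicity of the sum gradient
  have hsumB : (∑ i, ⟪g i xb - g i xstar, xb - xstar⟫) ≥ μb * c ^ 2 := by
    have h1 := hsc xb xstar
    have h2 := hsc xstar xb
    rw [hgs] at h1 h2
    have e1 : ⟪∑ i, g i xb, xstar - xb⟫ = - ⟪∑ i, g i xb, xb - xstar⟫ := by
      rw [show xstar - xb = -(xb - xstar) by abel, inner_neg_right]
    have e2 : ‖xstar - xb‖ = c := by rw [norm_sub_rev]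
    rw [e1, e2] at h2
    have hsum_eq : (∑ i, ⟪g i xb - g i xstar, xb - xstar⟫)
        = ⟪∑ i, g i xb, xb - xstar⟫ - ⟪∑ i, g i xstar, xb - xstar⟫ := by
      rw [← sum_inner, ← inner_sub_left, Finset.sum_sub_distrib]
    have e3 : ‖xb - xstar‖ = c := hc.symm
    rw [e3] at h1
    rw [hsum_eq]
    linarith
  -- per-coordinate bound
  have hkey : ∀ i : Fin N, ⟪g i (x i) - g i xstar, x i - xstar⟫
      ≥ ⟪g i xb - g i xstar, xb - xstar⟫ - 2 * (L i * ‖v i‖ * c) := by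
    intro i
    have hxi : x i - xstar = v i + (xb - xstar) := by rw [hvi i]; abel
    have hgi : g i (x i) - g i xstar = (g i (x i) - g i xb) + (g i xb - g i xstar) := by abel
    have hlipA : ‖g i (x i) - g i xb‖ ≤ L i * ‖v i‖ := by
      have := (hlip i).dist_le_mul (x i) xb
      rw [dist_eq_norm, dist_eq_norm, Real.coe_toNNReal (L i) (hL i)] at this
      rw [hvi i]
      exact this
    have hlipB : ‖g i xb - g i xstar‖ ≤ L i * c := by
      have := (hlip i).dist_le_mul xb xstar
      rw [dist_eq_norm, dist_eq_norm, Real.coe_toNNReal (L i) (hL i)] at this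
      exact this
    have hT1 : 0 ≤ ⟪g i (x i) - g i xb, v i⟫ := by
      rw [hvi i]
      exact aux_grad_mono (f i) (hconv i) (hdiff i) (x i) xb
    have hT2 : ⟪g i (x i) - g i xb, xb - xstar⟫ ≥ -(L i * ‖v i‖ * c) := by
      have habs := abs_real_inner_le_norm (g i (x i) - g i xb) (xb - xstar)
      have h1 : |⟪g i (x i) - g i xb, xb - xstar⟫| ≤ L i * ‖v i‖ * c := by
        calc |⟪g i (x i) - g i xb, xb - xstar⟫| ≤ ‖g i (x i) - g i xb‖ * ‖xb - xstar‖ := habs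
          _ ≤ L i * ‖v i‖ * c := by
              apply mul_le_mul_of_nonneg_right hlipA (norm_nonneg _)
      linarith [neg_abs_le ⟪g i (x i) - g i xb, xb - xstar⟫]
    have hT3 : ⟪g i xb - g i xstar, v i⟫ ≥ -(L i * ‖v i‖ * c) := by
      have habs := abs_real_inner_le_norm (g i xb - g i xstar) (v i)
      have h1 : |⟪g i xb - g i xstar, v i⟫| ≤ L i * ‖v i‖ * c := by
        calc |⟪g i xb - g i xstar, v i⟫| ≤ ‖g i xb - g i xstar‖ * ‖v i‖ := habs
          _ ≤ L i * c * ‖v i‖ := mul_le_mul_of_nonneg_right hlipB (norm_nonneg _)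
          _ = L i * ‖v i‖ * c := by ring
      linarith [neg_abs_le ⟪g i xb - g i xstar, v i⟫]
    calc ⟪g i (x i) - g i xstar, x i - xstar⟫
        = ⟪g i (x i) - g i xb, v i⟫ + ⟪g i (x i) - g i xb, xb - xstar⟫
          + (⟪g i xb - g i xstar, v i⟫ + ⟪g i xb - g i xstar, xb - xstar⟫) := by
          rw [hgi, hxi, inner_add_left, inner_add_right, inner_add_right]
      _ ≥ ⟪g i xb - g i xstar, xb - xstar⟫ - 2 * (L i * ‖v i‖ * c) := by linarith
  -- Cauchy-Schwarz for the cross terms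
  have hb2 : (∑ i, ‖v i‖ ^ 2) = b ^ 2 := by
    rw [hb, PiLp.norm_sq_eq_of_L2]
  have hcs : (∑ i, L i * ‖v i‖) ≤ Real.sqrt (∑ i, L i ^ 2) * b := by
    have h := Finset.sum_mul_sq_le_sq_mul_sq Finset.univ L (fun i => ‖v i‖)
    have hnn : 0 ≤ ∑ i, L i * ‖v i‖ :=
      Finset.sum_nonneg fun i _ => mul_nonneg (hL i) (norm_nonneg _)
    have h2 : (∑ i, L i * ‖v i‖) ^ 2 ≤ (Real.sqrt (∑ i, L i ^ 2) * b) ^ 2 := by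
      rw [mul_pow, Real.sq_sqrt hL2, ← hb2]
      exact h
    have h3 : 0 ≤ Real.sqrt (∑ i, L i ^ 2) * b := by positivity
    calc (∑ i, L i * ‖v i‖) = Real.sqrt ((∑ i, L i * ‖v i‖) ^ 2) := (Real.sqrt_sq hnn).symm
      _ ≤ Real.sqrt ((Real.sqrt (∑ i, L i ^ 2) * b) ^ 2) := Real.sqrt_le_sqrt h2
      _ = Real.sqrt (∑ i, L i ^ 2) * b := Real.sqrt_sq h3
  -- sum the per-coordinate bounds
  have hsum : (∑ i, ⟪g i (x i) - g i xstar, x i - xstar⟫)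
      ≥ μb * c ^ 2 - 2 * (Real.sqrt (∑ i, L i ^ 2) * b) * c := by
    have h1 : (∑ i, ⟪g i (x i) - g i xstar, x i - xstar⟫)
        ≥ ∑ i, (⟪g i xb - g i xstar, xb - xstar⟫ - 2 * (L i * ‖v i‖ * c)) :=
      Finset.sum_le_sum fun i _ => hkey i
    have h2 : (∑ i, (⟪g i xb - g i xstar, xb - xstar⟫ - 2 * (L i * ‖v i‖ * c)))
        = (∑ i, ⟪g i xb - g i xstar, xb - xstar⟫) - 2 * (∑ i, L i * ‖v i‖) * c := by
      rw [Finset.sum_sub_distrib]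
      congr 1
      rw [Finset.mul_sum, Finset.sum_mul]
      exact Finset.sum_congr rfl fun i _ => by ring
    have h3 : 2 * (∑ i, L i * ‖v i‖) * c ≤ 2 * (Real.sqrt (∑ i, L i ^ 2) * b) * c := by
      have := mul_le_mul_of_nonneg_right hcs hc0
      linarith
    rw [h2] at h1
    linarith [hsumB]
  -- expand the main inner product
  have hmain : ⟪gradient fα x - gradient fα bxstar, x - bxstar⟫
      = (∑ i, ⟪g i (x i) - g i xstar, x i - xstar⟫) + α * b ^ 2 := by
    rw [hgrad x, hgbx]
    have hdiff_el : (WithLp.equiv 2 (∀ _ : Fin N, EuclideanSpace ℝ (Fin n))).symm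
          (fun i => gradient (f i) (x i)) + α • (x - Pcons n N x)
        - (WithLp.equiv 2 (∀ _ : Fin N, EuclideanSpace ℝ (Fin n))).symm
          (fun i => gradient (f i) xstar)
        = ((WithLp.equiv 2 (∀ _ : Fin N, EuclideanSpace ℝ (Fin n))).symm
          (fun i => gradient (f i) (x i)) - (WithLp.equiv 2 (∀ _ : Fin N, EuclideanSpace ℝ (Fin n))).symm
          (fun i => gradient (f i) xstar)) + α • v := by
      rw [hv]; abel
    rw [hdiff_el, inner_add_left, real_inner_smul_left, hstepB, PiLp.inner_apply]
    congr 1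
  -- final quadratic comparison
  have hfinal := aux_quad2 (N : ℝ) μb (∑ i, L i ^ 2) α c b hNr hμb hL2 hα hc0 hb0
  have hμα : μα = (μb / (N : ℝ) + α) / 2
      - Real.sqrt (((μb / (N : ℝ) - α) / 2) ^ 2 + 4 * Real.sqrt ((∑ i, L i ^ 2) / (N : ℝ)) ^ 2) := rfl
  have horder : 2 * (Real.sqrt (∑ i, L i ^ 2) * b) * c
      = 2 * Real.sqrt (∑ i, L i ^ 2) * c * b := by ring
  rw [hmain, hstepC, hμα]
  linarith [hsum, hfinal, horder]
end
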